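/- Let W, ε_1, ε_0 be mutually independent real random variables with W ~ N(μ_e, σ_e^2), ε_1 ~ N(μ_1, σ_1^2), ε_0 ~ N(μ_0, σ_0^2), where σ_e > 0 and σ_1, σ_0 ≥ 0. Define the potential outcomes Y(z) = a_z W + ε_z for z ∈ {0,1} with a_1, a_0 ∈ ℝ, and the propensity score e = expit(W) where expit(w) = 1/(1+e^{−w}). Then V := E[{Y(1) − E[Y(1)]}^2 / e] + E[{Y(0) − E[Y(0)]}^2 / (1 − e)] = (a_1^2 + a_0^2) σ_e^2 + σ_1^2 + σ_0^2 + (a_1^2 σ_e^2(σ_e^2 + 1) + σ_1^2) · exp(−μ_e + σ_e^2/2) + (a_0^2 σ_e^2(σ_e^2 + 1) + σ_0^2) · exp(μ_e + σ_e^2/2). -/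

import Mathlib

open MeasureTheory ProbabilityTheory

open Real Set
open scoped ENNReal NNReal

set_option linter.unusedSectionVars false
set_option linter.unusedVariables false

open MeasureTheory Real Set ProbabilityTheory
open scoped ENNReal NNReal

lemma tendsto_mul_exp_neg_mul_sq {b : ℝ} (hb : 0 < b) :
    Filter.Tendsto (fun x : ℝ => x * Real.exp (-b * x ^ 2)) Filter.atTop (nhds 0) := by
  have h := rpow_mul_exp_neg_mul_sq_isLittleO_exp_neg hb 1
  simp only [Real.rpow_one] at h
  refine h.trans_tendsto ?_
  have : Filter.Tendsto (fun x : ℝ => (1/2) * x) Filter.atTop Filter.atTop :=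
    Filter.Tendsto.const_mul_atTop (by norm_num) Filter.tendsto_id
  have h2 := Real.tendsto_exp_neg_atTop_nhds_zero.comp this
  refine h2.congr fun x => ?_
  simp [Function.comp, neg_mul]

lemma integrable_sq_mul_exp_neg_mul_sq {b : ℝ} (hb : 0 < b) :
    Integrable (fun x : ℝ => x ^ 2 * Real.exp (-b * x ^ 2)) := by
  have h := integrable_rpow_mul_exp_neg_mul_sq hb (s := 2) (by norm_num)
  refine h.congr (Filter.Eventually.of_forall fun x => ?_)
  simp only [show ((2:ℝ) = ((2:ℕ):ℝ)) by norm_num, Real.rpow_natCast]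

lemma integral_Ioi_sq_mul_exp_neg_mul_sq {b : ℝ} (hb : 0 < b) :
    ∫ x in Ioi (0:ℝ), x ^ 2 * Real.exp (-b * x ^ 2) = (√(π / b) / 2) / (2 * b) := by
  have hderiv : ∀ x ∈ Ioi (0:ℝ), HasDerivAt (fun x : ℝ => x * Real.exp (-b * x ^ 2))
      ((1 - 2*b*x^2) * Real.exp (-b * x ^ 2)) x := by
    intro x _
    have h1 : HasDerivAt (fun x : ℝ => -b * x ^ 2) (-b * (2 * x)) x := by
      simpa using (hasDerivAt_pow 2 x).const_mul (-b)
    have h2 := h1.exp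
    have h3 := (hasDerivAt_id x).fun_mul h2
    refine h3.congr_deriv ?_
    simp only [id_eq]
    ring
  have hcont : ContinuousWithinAt (fun x : ℝ => x * Real.exp (-b * x ^ 2)) (Ici (0:ℝ)) 0 :=
    (Continuous.continuousWithinAt (by fun_prop))
  have hint : IntegrableOn (fun x : ℝ => (1 - 2*b*x^2) * Real.exp (-b * x ^ 2)) (Ioi (0:ℝ)) := by
    have : Integrable (fun x : ℝ => (1 - 2*b*x^2) * Real.exp (-b * x ^ 2)) := by
      have h1 := integrable_exp_neg_mul_sq hb
      have h2 := (integrable_sq_mul_exp_neg_mul_sq hb).const_mul (2*b)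
      refine (h1.sub h2).congr (Filter.Eventually.of_forall fun x => ?_)
      simp only [Pi.sub_apply]; ring
    exact this.integrableOn
  have key := MeasureTheory.integral_Ioi_of_hasDerivAt_of_tendsto (a := 0)
    hcont hderiv hint (tendsto_mul_exp_neg_mul_sq hb)
  simp only [zero_mul, ne_eq] at key
  have split : ∫ x in Ioi (0:ℝ), (1 - 2*b*x^2) * Real.exp (-b * x ^ 2)
      = (∫ x in Ioi (0:ℝ), Real.exp (-b * x ^ 2))
        - 2*b * ∫ x in Ioi (0:ℝ), x ^ 2 * Real.exp (-b * x ^ 2) := by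
    rw [← MeasureTheory.integral_const_mul, ← integral_sub ((integrable_exp_neg_mul_sq hb).integrableOn)
      (((integrable_sq_mul_exp_neg_mul_sq hb).const_mul (2*b)).integrableOn)]
    congr 1; ext x; ring
  rw [split, integral_gaussian_Ioi] at key
  have : 2*b * ∫ x in Ioi (0:ℝ), x ^ 2 * Real.exp (-b * x ^ 2) = √(π / b) / 2 := by linarith
  field_simp at this ⊢
  linarith

lemma integral_sq_mul_exp_neg_mul_sq {b : ℝ} (hb : 0 < b) :
    ∫ x : ℝ, x ^ 2 * Real.exp (-b * x ^ 2) = √(π / b) / (2 * b) := by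
  have h := integral_comp_abs (f := fun y : ℝ => y ^ 2 * Real.exp (-b * y ^ 2))
  simp only [sq_abs] at h
  rw [h, integral_Ioi_sq_mul_exp_neg_mul_sq hb]
  ring

lemma integral_id_mul_exp_neg_mul_sq (b : ℝ) :
    ∫ x : ℝ, x * Real.exp (-b * x ^ 2) = 0 := by
  have h := MeasureTheory.integral_neg_eq_self (fun x : ℝ => x * Real.exp (-b * x ^ 2)) volume
  simp only [neg_sq, neg_mul] at h
  rw [MeasureTheory.integral_neg] at h
  simp only [neg_mul]
  linarith [h]

variable {v : ℝ≥0} {μ : ℝ}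

lemma gaussianPDFReal_eq (μ : ℝ) (v : ℝ≥0) :
    gaussianPDFReal μ v = fun x => (√(2*π*v))⁻¹ * Real.exp (-(2*(v:ℝ))⁻¹ * (x-μ)^2) := by
  ext x
  rw [gaussianPDFReal]
  congr 1
  ring

lemma integrable_pow_mul_gaussianPDFReal (c m : ℝ) (v : ℝ≥0) (n : ℕ) :
    Integrable (fun x => (x - c)^n * gaussianPDFReal m v x) := by
  by_cases hv : v = 0
  · simp [hv]
  · have hvpos : (0:ℝ) < v := by positivity
    have hb : (0:ℝ) < (2*(v:ℝ))⁻¹ := by positivity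
    have key : ∀ k : ℕ, Integrable (fun y : ℝ => y ^ k * Real.exp (-(2*(v:ℝ))⁻¹ * y^2)) := by
      intro k
      have h := integrable_rpow_mul_exp_neg_mul_sq hb (s := k)
        (by exact_mod_cast neg_one_lt_zero.trans_le (Nat.cast_nonneg k))
      refine h.congr (Filter.Eventually.of_forall fun x => ?_)
      simp only [Real.rpow_natCast]
    have heq : (fun x => (x - c)^n * gaussianPDFReal m v x)
        = (fun y => (y + (m - c))^n * ((√(2*π*(v:ℝ)))⁻¹ * Real.exp (-(2*(v:ℝ))⁻¹ * y^2)))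
          ∘ (fun x => x - m) := by
      ext x
      simp only [Function.comp, gaussianPDFReal_eq]
      ring_nf
    rw [heq]
    have hsum : (fun y : ℝ => (y + (m - c))^n * ((√(2*π*(v:ℝ)))⁻¹ * Real.exp (-(2*(v:ℝ))⁻¹ * y^2)))
        = fun y => ∑ i ∈ Finset.range (n+1),
            ((m - c)^(n-i) * (n.choose i) * (√(2*π*(v:ℝ)))⁻¹) * (y^i * Real.exp (-(2*(v:ℝ))⁻¹ * y^2)) := by
      ext y
      rw [add_pow, Finset.sum_mul]
      refine Finset.sum_congr rfl fun i _ => ?_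
      ring
    rw [hsum]
    have hg : Integrable (fun y : ℝ => ∑ i ∈ Finset.range (n+1),
        ((m - c)^(n-i) * (n.choose i) * (√(2*π*(v:ℝ)))⁻¹) * (y^i * Real.exp (-(2*(v:ℝ))⁻¹ * y^2)))
        (volume : Measure ℝ) := integrable_finset_sum _ fun i _ => ((key i).const_mul _)
    exact hg.comp_sub_right m

lemma gaussianPDFReal_tilt (hv : v ≠ 0) (t x : ℝ) :
    Real.exp (t*x) * gaussianPDFReal μ v x
      = Real.exp (t*μ + v*t^2/2) * gaussianPDFReal (μ + t*v) v x := by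
  have hv' : ((v:ℝ)) ≠ 0 := NNReal.coe_ne_zero.mpr hv
  simp only [gaussianPDFReal]
  rw [mul_left_comm, ← Real.exp_add, mul_left_comm, ← Real.exp_add]
  congr 2
  field_simp
  ring

lemma integral_sub_sq_mul_gaussianPDFReal (hv : v ≠ 0) (m : ℝ) :
    ∫ x, (x - m)^2 * gaussianPDFReal m v x = v := by
  have hvpos : (0:ℝ) < v := by positivity
  have hb : (0:ℝ) < (2*(v:ℝ))⁻¹ := by positivity
  have heq : (fun x => (x - m)^2 * gaussianPDFReal m v x)
      = (fun y => (√(2*π*(v:ℝ)))⁻¹ * (y^2 * Real.exp (-(2*(v:ℝ))⁻¹ * y^2))) ∘ (fun x => x - m) := by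
    ext x
    simp only [Function.comp, gaussianPDFReal_eq]
    ring
  rw [heq, Function.comp_def, integral_sub_right_eq_self (μ := volume)
    (fun y => (√(2*π*(v:ℝ)))⁻¹ * (y^2 * Real.exp (-(2*(v:ℝ))⁻¹ * y^2))) m,
    MeasureTheory.integral_const_mul, integral_sq_mul_exp_neg_mul_sq hb]
  rw [show π / (2*(v:ℝ))⁻¹ = 2*π*(v:ℝ) by field_simp]
  have hs : (0:ℝ) < √(2*π*(v:ℝ)) := Real.sqrt_pos.mpr (by positivity)
  field_simp

lemma integral_sub_mul_gaussianPDFReal (hv : v ≠ 0) (m : ℝ) :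
    ∫ x, (x - m) * gaussianPDFReal m v x = 0 := by
  have hvpos : (0:ℝ) < v := by positivity
  have heq : (fun x => (x - m) * gaussianPDFReal m v x)
      = (fun y => (√(2*π*(v:ℝ)))⁻¹ * (y * Real.exp (-(2*(v:ℝ))⁻¹ * y^2))) ∘ (fun x => x - m) := by
    ext x
    simp only [Function.comp, gaussianPDFReal_eq]
    ring
  rw [heq, Function.comp_def, integral_sub_right_eq_self (μ := volume)
    (fun y => (√(2*π*(v:ℝ)))⁻¹ * (y * Real.exp (-(2*(v:ℝ))⁻¹ * y^2))) m,
    MeasureTheory.integral_const_mul, integral_id_mul_exp_neg_mul_sq, mul_zero]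
lemma integral_gaussianReal_eq (hv : v ≠ 0) (g : ℝ → ℝ) :
    ∫ x, g x ∂(gaussianReal μ v) = ∫ x, g x * gaussianPDFReal μ v x := by
  rw [gaussianReal_of_var_ne_zero _ hv]
  have hmeas : Measurable fun x => (gaussianPDFReal μ v x).toNNReal :=
    (measurable_gaussianPDFReal μ v).real_toNNReal
  have hrw : (volume.withDensity (gaussianPDF μ v))
      = volume.withDensity (fun x => ((gaussianPDFReal μ v x).toNNReal : ℝ≥0∞)) := rfl
  rw [hrw, integral_withDensity_eq_integral_smul hmeas g]
  refine integral_congr_ae (Filter.Eventually.of_forall fun x => ?_)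
  simp [NNReal.smul_def, Real.coe_toNNReal _ (gaussianPDFReal_nonneg μ v x), mul_comm]

lemma integrable_gaussianReal_iff (hv : v ≠ 0) (g : ℝ → ℝ) :
    Integrable g (gaussianReal μ v) ↔ Integrable (fun x => g x * gaussianPDFReal μ v x) volume := by
  rw [gaussianReal_of_var_ne_zero _ hv]
  have hrw : (volume.withDensity (gaussianPDF μ v))
      = volume.withDensity (fun x => ((gaussianPDFReal μ v x).toNNReal : ℝ≥0∞)) := rfl
  rw [hrw, integrable_withDensity_iff_integrable_smul ((measurable_gaussianPDFReal μ v).real_toNNReal)]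
  constructor <;> intro h <;> refine h.congr (Filter.Eventually.of_forall fun x => ?_) <;>
    simp [NNReal.smul_def, Real.coe_toNNReal _ (gaussianPDFReal_nonneg μ v x), mul_comm]

lemma integrable_dirac_real {f : ℝ → ℝ} (hf : Measurable f) (a : ℝ) :
    Integrable f (Measure.dirac a) := by
  refine ⟨hf.aestronglyMeasurable, ?_⟩
  rw [HasFiniteIntegral, lintegral_dirac' a (by measurability)]
  exact ENNReal.coe_lt_top

lemma integrable_pow_mul_exp_gaussianReal (hv : v ≠ 0) (c t : ℝ) (n : ℕ) :
    Integrable (fun x => (x - c)^n * Real.exp (t*x)) (gaussianReal μ v) := by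
  rw [integrable_gaussianReal_iff hv]
  have heq : (fun x => (x - c)^n * Real.exp (t*x) * gaussianPDFReal μ v x)
      = fun x => Real.exp (t*μ + v*t^2/2) * ((x - c)^n * gaussianPDFReal (μ + t*(v:ℝ)) v x) := by
    ext x
    rw [show (x - c)^n * Real.exp (t*x) * gaussianPDFReal μ v x
        = (x-c)^n * (Real.exp (t*x) * gaussianPDFReal μ v x) by ring, gaussianPDFReal_tilt hv]
    ring
  rw [heq]
  exact (integrable_pow_mul_gaussianPDFReal c (μ + t*(v:ℝ)) v n).const_mul _

lemma integrable_pow_gaussianReal (m c : ℝ) (v : ℝ≥0) (n : ℕ) :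
    Integrable (fun x => (x - c)^n) (gaussianReal m v) := by
  by_cases hv : v = 0
  · rw [hv, gaussianReal_zero_var]
    exact integrable_dirac_real (by measurability) m
  · have h := integrable_pow_mul_exp_gaussianReal (μ := m) hv c 0 n
    refine h.congr (Filter.Eventually.of_forall fun x => ?_)
    simp

lemma integral_exp_gaussianReal (hv : v ≠ 0) (t : ℝ) :
    ∫ x, Real.exp (t*x) ∂(gaussianReal μ v) = Real.exp (t*μ + (v:ℝ)*t^2/2) := by
  rw [integral_gaussianReal_eq hv]
  simp only [gaussianPDFReal_tilt hv]
  rw [MeasureTheory.integral_const_mul, integral_gaussianPDFReal_eq_one _ hv, mul_one]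

lemma integral_sub_sq_mul_gaussianPDFReal' (hv : v ≠ 0) (c m : ℝ) :
    ∫ x, (x - c)^2 * gaussianPDFReal m v x = (v:ℝ) + (m - c)^2 := by
  have e : (fun x : ℝ => (x - c)^2 * gaussianPDFReal m v x)
      = fun x => ((x-m)^2 * gaussianPDFReal m v x + (2*(m-c)) * ((x-m) * gaussianPDFReal m v x))
          + (m-c)^2 * gaussianPDFReal m v x := by
    ext x; ring
  have i2 : Integrable (fun x : ℝ => (x-m)^2 * gaussianPDFReal m v x) :=
    integrable_pow_mul_gaussianPDFReal m m v 2
  have i1 : Integrable (fun x : ℝ => (x-m) * gaussianPDFReal m v x) := by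
    refine (integrable_pow_mul_gaussianPDFReal m m v 1).congr
      (Filter.Eventually.of_forall fun x => ?_)
    simp
  have i0 : Integrable (fun x : ℝ => gaussianPDFReal m v x) := integrable_gaussianPDFReal m v
  have i1' : Integrable (fun x : ℝ => 2*(m-c) * ((x-m) * gaussianPDFReal m v x)) := i1.const_mul _
  have i0' : Integrable (fun x : ℝ => (m-c)^2 * gaussianPDFReal m v x) := i0.const_mul _
  have iA : Integrable (fun x : ℝ => (x-m)^2 * gaussianPDFReal m v x
      + 2*(m-c) * ((x-m) * gaussianPDFReal m v x)) := i2.add i1'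
  rw [e, integral_add iA i0', integral_add i2 i1',
    MeasureTheory.integral_const_mul, MeasureTheory.integral_const_mul,
    integral_sub_sq_mul_gaussianPDFReal hv m, integral_sub_mul_gaussianPDFReal hv m,
    integral_gaussianPDFReal_eq_one _ hv]
  ring

lemma integral_sub_sq_mul_exp_gaussianReal (hv : v ≠ 0) (t : ℝ) :
    ∫ x, (x - μ)^2 * Real.exp (t*x) ∂(gaussianReal μ v)
      = Real.exp (t*μ + (v:ℝ)*t^2/2) * ((v:ℝ) + (t*(v:ℝ))^2) := by
  rw [integral_gaussianReal_eq hv]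
  have e : (fun x : ℝ => (x - μ)^2 * Real.exp (t*x) * gaussianPDFReal μ v x)
      = fun x => Real.exp (t*μ + (v:ℝ)*t^2/2) * ((x - μ)^2 * gaussianPDFReal (μ + t*(v:ℝ)) v x) := by
    ext x
    rw [show (x - μ)^2 * Real.exp (t*x) * gaussianPDFReal μ v x
        = (x-μ)^2 * (Real.exp (t*x) * gaussianPDFReal μ v x) by ring, gaussianPDFReal_tilt hv]
    ring
  rw [e, MeasureTheory.integral_const_mul, integral_sub_sq_mul_gaussianPDFReal' hv μ (μ + t*(v:ℝ))]
  ring_nf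

lemma integral_id_gaussianReal (m : ℝ) (v : ℝ≥0) :
    ∫ x, x ∂(gaussianReal m v) = m := by
  by_cases hv : v = 0
  · rw [hv, gaussianReal_zero_var, integral_dirac]
  · rw [integral_gaussianReal_eq hv]
    have e : (fun x : ℝ => x * gaussianPDFReal m v x)
        = fun x => (x - m) * gaussianPDFReal m v x + m * gaussianPDFReal m v x := by
      ext x; ring
    have i1 : Integrable (fun x : ℝ => (x-m) * gaussianPDFReal m v x) := by
      refine (integrable_pow_mul_gaussianPDFReal m m v 1).congr
        (Filter.Eventually.of_forall fun x => ?_)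
      simp
    rw [e, integral_add i1 ((integrable_gaussianPDFReal m v).const_mul _),
      integral_sub_mul_gaussianPDFReal hv m, MeasureTheory.integral_const_mul,
      integral_gaussianPDFReal_eq_one _ hv]
    ring

lemma integral_sub_gaussianReal (m : ℝ) (v : ℝ≥0) :
    ∫ x, (x - m) ∂(gaussianReal m v) = 0 := by
  by_cases hv : v = 0
  · rw [hv, gaussianReal_zero_var, integral_dirac]
    simp
  · rw [integral_gaussianReal_eq hv, integral_sub_mul_gaussianPDFReal hv m]

lemma integral_sub_sq_gaussianReal (m : ℝ) (v : ℝ≥0) :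
    ∫ x, (x - m)^2 ∂(gaussianReal m v) = v := by
  by_cases hv : v = 0
  · rw [hv, gaussianReal_zero_var, integral_dirac]
    simp
  · rw [integral_gaussianReal_eq hv, integral_sub_sq_mul_gaussianPDFReal hv m]

lemma integrable_id_gaussianReal (m : ℝ) (v : ℝ≥0) :
    Integrable (fun x : ℝ => x) (gaussianReal m v) := by
  have h := integrable_pow_gaussianReal m 0 v 1
  refine h.congr (Filter.Eventually.of_forall fun x => ?_)
  simp
section Prob
variable {Ω : Type*} [MeasurableSpace Ω] (P : Measure Ω) [IsProbabilityMeasure P]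

lemma integrable_comp_law {X : Ω → ℝ} (hX : Measurable X) {ν : Measure ℝ}
    (hlaw : Measure.map X P = ν) {f : ℝ → ℝ} (hf : Measurable f)
    (hint : Integrable f ν) : Integrable (fun ω => f (X ω)) P := by
  have h : Integrable f (Measure.map X P) := by rw [hlaw]; exact hint
  exact (integrable_map_measure hf.aestronglyMeasurable hX.aemeasurable).mp h

lemma integral_comp_law {X : Ω → ℝ} (hX : Measurable X) {ν : Measure ℝ}
    (hlaw : Measure.map X P = ν) {f : ℝ → ℝ} (hf : Measurable f) :
    ∫ ω, f (X ω) ∂P = ∫ x, f x ∂ν := by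
  rw [← hlaw, integral_map hX.aemeasurable hf.aestronglyMeasurable]

lemma mean_aux (W ε : Ω → ℝ) (hW : Measurable W) (hε : Measurable ε) (μ m : ℝ) (v u : ℝ≥0)
    (hWlaw : Measure.map W P = gaussianReal μ v) (hεlaw : Measure.map ε P = gaussianReal m u)
    (a : ℝ) : ∫ ω, (a * W ω + ε ω) ∂P = a * μ + m := by
  have hWint : Integrable W P := by
    have h := integrable_comp_law P hW hWlaw measurable_id (integrable_id_gaussianReal μ v)
    exact h
  have hεint : Integrable ε P := by
    have h := integrable_comp_law P hε hεlaw measurable_id (integrable_id_gaussianReal m u)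
    exact h
  rw [integral_add (hWint.const_mul a) hεint, MeasureTheory.integral_const_mul]
  have h1 : ∫ ω, W ω ∂P = μ :=
    (integral_comp_law P hW hWlaw (f := fun x : ℝ => x) measurable_id).trans
      (integral_id_gaussianReal μ v)
  have h2 : ∫ ω, ε ω ∂P = m :=
    (integral_comp_law P hε hεlaw (f := fun x : ℝ => x) measurable_id).trans
      (integral_id_gaussianReal m u)
  rw [h1, h2]

lemma term_aux (W ε : Ω → ℝ) (hW : Measurable W) (hε : Measurable ε)
    (hind : ProbabilityTheory.IndepFun W ε P) (μ m : ℝ) (v u : ℝ≥0) (hv : v ≠ 0)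
    (hWlaw : Measure.map W P = gaussianReal μ v) (hεlaw : Measure.map ε P = gaussianReal m u)
    (a t : ℝ) :
    ∫ ω, (a * W ω + ε ω - (a * μ + m))^2 * (1 + Real.exp (t * W ω)) ∂P
      = a^2*(v:ℝ) + (u:ℝ)
        + (a^2*((v:ℝ) + (v:ℝ)^2*t^2) + (u:ℝ)) * Real.exp (t*μ + (v:ℝ)*t^2/2) := by
  set C := Real.exp (t*μ + (v:ℝ)*t^2/2) with hC
  set F₁ : ℝ → ℝ := fun w => (a*(w - μ))^2 * (1 + Real.exp (t*w)) with hF₁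
  set F₂ : ℝ → ℝ := fun w => 2*a*(w-μ) * (1 + Real.exp (t*w)) with hF₂
  set F₃ : ℝ → ℝ := fun w => 1 + Real.exp (t*w) with hF₃
  set G₂ : ℝ → ℝ := fun e => e - m with hG₂
  set G₃ : ℝ → ℝ := fun e => (e-m)^2 with hG₃
  have mF₁ : Measurable F₁ := by fun_prop
  have mF₂ : Measurable F₂ := by fun_prop
  have mF₃ : Measurable F₃ := by fun_prop
  have mG₂ : Measurable G₂ := by fun_prop
  have mG₃ : Measurable G₃ := by fun_prop
  -- integrability at the law level
  have iexp : Integrable (fun x => Real.exp (t*x)) (gaussianReal μ v) := by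
    refine (integrable_pow_mul_exp_gaussianReal hv 0 t 0).congr
      (Filter.Eventually.of_forall fun x => ?_)
    simp
  have iF₁ : Integrable F₁ (gaussianReal μ v) := by
    have h := ((integrable_pow_gaussianReal μ μ v 2).const_mul (a^2)).add
      ((integrable_pow_mul_exp_gaussianReal hv μ t 2).const_mul (a^2))
    refine h.congr (Filter.Eventually.of_forall fun x => ?_)
    simp only [hF₁, Pi.add_apply]
    ring
  have iF₂ : Integrable F₂ (gaussianReal μ v) := by
    have h := ((integrable_pow_gaussianReal μ μ v 1).const_mul (2*a)).add
      ((integrable_pow_mul_exp_gaussianReal hv μ t 1).const_mul (2*a))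
    refine h.congr (Filter.Eventually.of_forall fun x => ?_)
    simp only [hF₂, pow_one, Pi.add_apply]
    ring
  have iF₃ : Integrable F₃ (gaussianReal μ v) := by
    have h := (integrable_const (1:ℝ) (μ := gaussianReal μ v)).add iexp
    refine h.congr (Filter.Eventually.of_forall fun x => ?_)
    simp [hF₃]
  have iG₂ : Integrable G₂ (gaussianReal m u) := by
    refine (integrable_pow_gaussianReal m m u 1).congr
      (Filter.Eventually.of_forall fun x => ?_)
    simp [hG₂]
  have iG₃ : Integrable G₃ (gaussianReal m u) := integrable_pow_gaussianReal m m u 2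
  -- transfer to Ω
  have iF₁P : Integrable (fun ω => F₁ (W ω)) P := integrable_comp_law P hW hWlaw mF₁ iF₁
  have iF₂P : Integrable (fun ω => F₂ (W ω)) P := integrable_comp_law P hW hWlaw mF₂ iF₂
  have iF₃P : Integrable (fun ω => F₃ (W ω)) P := integrable_comp_law P hW hWlaw mF₃ iF₃
  have iG₂P : Integrable (fun ω => G₂ (ε ω)) P := integrable_comp_law P hε hεlaw mG₂ iG₂
  have iG₃P : Integrable (fun ω => G₃ (ε ω)) P := integrable_comp_law P hε hεlaw mG₃ iG₃
  have ind2 : ProbabilityTheory.IndepFun (fun ω => F₂ (W ω)) (fun ω => G₂ (ε ω)) P :=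
    hind.comp mF₂ mG₂
  have ind3 : ProbabilityTheory.IndepFun (fun ω => F₃ (W ω)) (fun ω => G₃ (ε ω)) P :=
    hind.comp mF₃ mG₃
  have i23 : Integrable (fun ω => F₂ (W ω) * G₂ (ε ω)) P := ind2.integrable_mul iF₂P iG₂P
  have i33 : Integrable (fun ω => F₃ (W ω) * G₃ (ε ω)) P := ind3.integrable_mul iF₃P iG₃P
  -- pointwise decomposition
  have e : (fun ω => (a * W ω + ε ω - (a * μ + m))^2 * (1 + Real.exp (t * W ω)))
      = fun ω => F₁ (W ω) + (F₂ (W ω) * G₂ (ε ω) + F₃ (W ω) * G₃ (ε ω)) := by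
    ext ω
    simp only [hF₁, hF₂, hF₃, hG₂, hG₃]
    ring
  have i2333 : Integrable (fun ω => F₂ (W ω) * G₂ (ε ω) + F₃ (W ω) * G₃ (ε ω)) P := i23.add i33
  rw [e, integral_add iF₁P i2333, integral_add i23 i33]
  -- evaluate each piece
  have vF₁ : ∫ ω, F₁ (W ω) ∂P = a^2*(v:ℝ) + a^2 * (C * ((v:ℝ) + (t*(v:ℝ))^2)) := by
    rw [integral_comp_law P hW hWlaw mF₁]
    have e1 : F₁ = fun x => a^2 * (x-μ)^2 + a^2 * ((x-μ)^2 * Real.exp (t*x)) := by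
      ext x; simp only [hF₁]; ring
    rw [e1, integral_add ((integrable_pow_gaussianReal μ μ v 2).const_mul (a^2))
        ((integrable_pow_mul_exp_gaussianReal hv μ t 2).const_mul (a^2)),
      MeasureTheory.integral_const_mul, MeasureTheory.integral_const_mul,
      integral_sub_sq_gaussianReal μ v, integral_sub_sq_mul_exp_gaussianReal hv t]
  have vF₂ : ∫ ω, F₂ (W ω) * G₂ (ε ω) ∂P = (∫ ω, F₂ (W ω) ∂P) * ∫ ω, G₂ (ε ω) ∂P :=
    ind2.integral_fun_mul_eq_mul_integral (mF₂.comp hW).aestronglyMeasurable (mG₂.comp hε).aestronglyMeasurable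
  have vG₂ : ∫ ω, G₂ (ε ω) ∂P = 0 := by
    rw [integral_comp_law P hε hεlaw mG₂]
    exact integral_sub_gaussianReal m u
  have vF₃G₃ : ∫ ω, F₃ (W ω) * G₃ (ε ω) ∂P = (1 + C) * (u:ℝ) := by
    have hm' : ∫ ω, F₃ (W ω) * G₃ (ε ω) ∂P = (∫ ω, F₃ (W ω) ∂P) * ∫ ω, G₃ (ε ω) ∂P :=
      ind3.integral_fun_mul_eq_mul_integral (mF₃.comp hW).aestronglyMeasurable (mG₃.comp hε).aestronglyMeasurable
    rw [hm']
    have h3 : ∫ ω, F₃ (W ω) ∂P = 1 + C := by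
      rw [integral_comp_law P hW hWlaw mF₃]
      have e3 : F₃ = fun x => 1 + Real.exp (t*x) := rfl
      rw [e3, integral_add (integrable_const 1) iexp, integral_exp_gaussianReal hv t]
      simp [hC]
    have h4 : ∫ ω, G₃ (ε ω) ∂P = (u:ℝ) := by
      rw [integral_comp_law P hε hεlaw mG₃]
      exact integral_sub_sq_gaussianReal m u
    rw [h3, h4]
  rw [vF₁, vF₂, vG₂, vF₃G₃]
  ring

end Prob


/-- The logistic (expit) function. -/
noncomputable def expit (w : ℝ) : ℝ := 1 / (1 + Real.exp (-w))

lemma div_expit (s w : ℝ) : s / expit w = s * (1 + Real.exp (-w)) := by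
  rw [expit, one_div, div_eq_mul_inv, inv_inv]

lemma div_one_sub_expit (s w : ℝ) : s / (1 - expit w) = s * (1 + Real.exp w) := by
  have hpos : (0:ℝ) < 1 + Real.exp (-w) := by positivity
  have h : 1 - expit w = (1 + Real.exp w)⁻¹ := by
    have h1 : Real.exp w ≠ 0 := (Real.exp_pos w).ne'
    have h2 : (0:ℝ) < 1 + (Real.exp w)⁻¹ := by positivity
    have h3 : (0:ℝ) < 1 + Real.exp w := by positivity
    rw [expit, Real.exp_neg]
    field_simp
    ring
  rw [h, div_eq_mul_inv, inv_inv]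

/-- Closed form of the asymptotic variance `V` of the Hájek IPW estimator under the working
model: `W ~ N(μₑ, σₑ²)` is the latent logit-propensity, the potential outcomes are
`Y(z) = a_z W + ε_z` with mutually independent Gaussian noises, and `e = expit(W)`. Then
`V = E[{Y(1) − E Y(1)}²/e] + E[{Y(0) − E Y(0)}²/(1 − e)]` equals
`(a₁² + a₀²)σₑ² + σ₁² + σ₀² + (a₁²σₑ²(σₑ²+1) + σ₁²) e^{−μₑ+σₑ²/2}
  + (a₀²σₑ²(σₑ²+1) + σ₀²) e^{μₑ+σₑ²/2}`. -/
theorem hajek_asymptotic_variance_closed_form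
    {Ω : Type*} [MeasurableSpace Ω] (P : Measure Ω) [IsProbabilityMeasure P]
    (W ε₁ ε₀ : Ω → ℝ) (hW : Measurable W) (hε₁ : Measurable ε₁) (hε₀ : Measurable ε₀)
    (hindep : iIndepFun ![W, ε₁, ε₀] P)
    (μₑ σₑ μ₁ μ₀ σ₁ σ₀ a₁ a₀ : ℝ) (hσₑ : 0 < σₑ) (hσ₁ : 0 ≤ σ₁) (hσ₀ : 0 ≤ σ₀)
    (hWlaw : Measure.map W P = gaussianReal μₑ ⟨σₑ ^ 2, sq_nonneg σₑ⟩)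
    (hε₁law : Measure.map ε₁ P = gaussianReal μ₁ ⟨σ₁ ^ 2, sq_nonneg σ₁⟩)
    (hε₀law : Measure.map ε₀ P = gaussianReal μ₀ ⟨σ₀ ^ 2, sq_nonneg σ₀⟩) :
    (∫ ω, (a₁ * W ω + ε₁ ω - ∫ ω', (a₁ * W ω' + ε₁ ω') ∂P) ^ 2 / expit (W ω) ∂P)
      + (∫ ω, (a₀ * W ω + ε₀ ω - ∫ ω', (a₀ * W ω' + ε₀ ω') ∂P) ^ 2 / (1 - expit (W ω)) ∂P)
      = (a₁ ^ 2 + a₀ ^ 2) * σₑ ^ 2 + σ₁ ^ 2 + σ₀ ^ 2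
        + (a₁ ^ 2 * σₑ ^ 2 * (σₑ ^ 2 + 1) + σ₁ ^ 2) * Real.exp (-μₑ + σₑ ^ 2 / 2)
        + (a₀ ^ 2 * σₑ ^ 2 * (σₑ ^ 2 + 1) + σ₀ ^ 2) * Real.exp (μₑ + σₑ ^ 2 / 2) := by
  set v : ℝ≥0 := ⟨σₑ ^ 2, sq_nonneg σₑ⟩ with hvdef
  have hvcoe : ((v:ℝ)) = σₑ ^ 2 := rfl
  have hv : v ≠ 0 := by
    intro h
    have h2 : ((v:ℝ)) = 0 := by rw [h]; rfl
    rw [hvcoe] at h2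
    exact pow_ne_zero 2 hσₑ.ne' h2
  have ind₁ : ProbabilityTheory.IndepFun W ε₁ P := by
    have h := hindep.indepFun (show (0 : Fin 3) ≠ 1 by decide)
    simpa using h
  have ind₀ : ProbabilityTheory.IndepFun W ε₀ P := by
    have h := hindep.indepFun (show (0 : Fin 3) ≠ 2 by decide)
    simpa using h
  have hm₁ : (∫ ω', (a₁ * W ω' + ε₁ ω') ∂P) = a₁ * μₑ + μ₁ :=
    mean_aux P W ε₁ hW hε₁ μₑ μ₁ v _ hWlaw hε₁law a₁
  have hm₀ : (∫ ω', (a₀ * W ω' + ε₀ ω') ∂P) = a₀ * μₑ + μ₀ :=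
    mean_aux P W ε₀ hW hε₀ μₑ μ₀ v _ hWlaw hε₀law a₀
  have T₁ : (∫ ω, (a₁ * W ω + ε₁ ω - ∫ ω', (a₁ * W ω' + ε₁ ω') ∂P) ^ 2 / expit (W ω) ∂P)
      = a₁^2*(v:ℝ) + ((⟨σ₁ ^ 2, sq_nonneg σ₁⟩ : ℝ≥0):ℝ)
        + (a₁^2*((v:ℝ) + (v:ℝ)^2*(-1:ℝ)^2) + ((⟨σ₁ ^ 2, sq_nonneg σ₁⟩ : ℝ≥0):ℝ))
          * Real.exp ((-1)*μₑ + (v:ℝ)*(-1:ℝ)^2/2) := by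
    rw [hm₁]
    have e : (fun ω => (a₁ * W ω + ε₁ ω - (a₁ * μₑ + μ₁)) ^ 2 / expit (W ω))
        = fun ω => (a₁ * W ω + ε₁ ω - (a₁ * μₑ + μ₁)) ^ 2 * (1 + Real.exp ((-1) * W ω)) := by
      ext ω
      rw [div_expit, neg_one_mul]
    rw [e]
    exact term_aux P W ε₁ hW hε₁ ind₁ μₑ μ₁ v _ hv hWlaw hε₁law a₁ (-1)
  have T₀ : (∫ ω, (a₀ * W ω + ε₀ ω - ∫ ω', (a₀ * W ω' + ε₀ ω') ∂P) ^ 2 / (1 - expit (W ω)) ∂P)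
      = a₀^2*(v:ℝ) + ((⟨σ₀ ^ 2, sq_nonneg σ₀⟩ : ℝ≥0):ℝ)
        + (a₀^2*((v:ℝ) + (v:ℝ)^2*(1:ℝ)^2) + ((⟨σ₀ ^ 2, sq_nonneg σ₀⟩ : ℝ≥0):ℝ))
          * Real.exp (1*μₑ + (v:ℝ)*(1:ℝ)^2/2) := by
    rw [hm₀]
    have e : (fun ω => (a₀ * W ω + ε₀ ω - (a₀ * μₑ + μ₀)) ^ 2 / (1 - expit (W ω)))
        = fun ω => (a₀ * W ω + ε₀ ω - (a₀ * μₑ + μ₀)) ^ 2 * (1 + Real.exp (1 * W ω)) := by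
      ext ω
      rw [div_one_sub_expit, one_mul]
    rw [e]
    exact term_aux P W ε₀ hW hε₀ ind₀ μₑ μ₀ v _ hv hWlaw hε₀law a₀ 1
  rw [T₁, T₀, hvcoe]
  have hc₁ : ((⟨σ₁ ^ 2, sq_nonneg σ₁⟩ : ℝ≥0):ℝ) = σ₁ ^ 2 := rfl
  have hc₀ : ((⟨σ₀ ^ 2, sq_nonneg σ₀⟩ : ℝ≥0):ℝ) = σ₀ ^ 2 := rfl
  rw [hc₁, hc₀, show (-1)*μₑ + σₑ^2*(-1:ℝ)^2/2 = -μₑ + σₑ^2/2 by ring,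
    show 1*μₑ + σₑ^2*(1:ℝ)^2/2 = μₑ + σₑ^2/2 by ring]
  ring
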